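/- arXiv:2306.00713 — 6 statements merged into one kernel-verified Lean document; each statement's English description precedes it below -/
import Mathlib

section
/- Let d, c > 0 and let g : ℝ → ℝ be continuous with the sign condition g(v)(v - μ) < 0 for all v ≥ 0, v ≠ μ, where μ > 0 (here g(v) = G(0,v)). Consider the planar system ψ' = χ, d χ' = cχ - ψ g(ψ). If (ψ, χ)(z₀) lies in A₁ = {ψ > μ, χ > 0} for some z₀, then ψ(z) → +∞ as z → +∞; in particular ψ is unbounded. -/
open Filter Set

/-- If a trajectory of `ψ' = χ`, `dχ' = cχ - ψ g(ψ)` enters the region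
`A₁ = {ψ > μ, χ > 0}`, then `ψ(z) → +∞` as `z → +∞`. -/
theorem stmt7 (d c μ : ℝ) (hd : 0 < d) (hc : 0 < c) (hμ : 0 < μ)
    (g : ℝ → ℝ) (hg : Continuous g)
    (hsign : ∀ v, 0 ≤ v → v ≠ μ → g v * (v - μ) < 0)
    (ψ χ : ℝ → ℝ)
    (hψ : ∀ z, HasDerivAt ψ (χ z) z)
    (hχ : ∀ z, HasDerivAt χ ((c * χ z - ψ z * g (ψ z)) / d) z)
    (z₀ : ℝ) (h₁ : μ < ψ z₀) (h₂ : 0 < χ z₀) :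
    Filter.Tendsto ψ Filter.atTop Filter.atTop := by
  have hψc : Continuous ψ := continuous_iff_continuousAt.mpr fun z => (hψ z).continuousAt
  have hχc : Continuous χ := continuous_iff_continuousAt.mpr fun z => (hχ z).continuousAt
  have hdψ : ∀ z, deriv ψ z = χ z := fun z => (hψ z).deriv
  have hdχ : ∀ z, deriv χ z = (c * χ z - ψ z * g (ψ z)) / d := fun z => (hχ z).deriv
  have hpos : ∀ z, μ < ψ z → 0 < χ z → 0 < (c * χ z - ψ z * g (ψ z)) / d := by
    intro z hz1 hz2
    have hg0 : g (ψ z) < 0 := by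
      have h := hsign (ψ z) (le_of_lt (hμ.trans hz1)) (by linarith)
      nlinarith
    have : 0 < c * χ z - ψ z * g (ψ z) := by nlinarith
    positivity
  -- forward invariance of A₁
  have key : ∀ z, z₀ ≤ z → μ < ψ z ∧ 0 < χ z := by
    by_contra hcon
    push_neg at hcon
    obtain ⟨w, hw, hw2⟩ := hcon
    set B : Set ℝ := {z | z₀ ≤ z ∧ (ψ z ≤ μ ∨ χ z ≤ 0)} with hBdef
    have hBne : B.Nonempty := by
      refine ⟨w, hw, ?_⟩
      rcases lt_or_ge μ (ψ w) with h' | h'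
      · exact Or.inr (hw2 h')
      · exact Or.inl h'
    have hBclosed : IsClosed B :=
      (isClosed_le continuous_const continuous_id).inter
        ((isClosed_le hψc continuous_const).union (isClosed_le hχc continuous_const))
    have hBbdd : BddBelow B := ⟨z₀, fun z hz => hz.1⟩
    set T := sInf B with hTdef
    have hT : T ∈ B := hBclosed.csInf_mem hBne hBbdd
    have hz₀notB : z₀ ∉ B := by
      intro h
      rcases h.2 with h' | h' <;> linarith
    have hTz₀ : z₀ < T := by
      rcases lt_or_eq_of_le (le_csInf hBne fun z hz => hz.1) with h | h
      · exact h
      · exact absurd (h ▸ hT) hz₀notB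
    have hbefore : ∀ z ∈ Ico z₀ T, μ < ψ z ∧ 0 < χ z := by
      intro z hz
      by_contra h'
      push_neg at h'
      have hzB : z ∈ B := by
        refine ⟨hz.1, ?_⟩
        rcases lt_or_ge μ (ψ z) with h'' | h''
        · exact Or.inr (h' h'')
        · exact Or.inl h''
      exact absurd (csInf_le hBbdd hzB) (not_le.mpr hz.2)
    have hψmono : StrictMonoOn ψ (Icc z₀ T) := by
      apply strictMonoOn_of_deriv_pos (convex_Icc _ _) hψc.continuousOn
      intro z hz
      rw [interior_Icc] at hz
      rw [hdψ]
      exact (hbefore z ⟨hz.1.le, hz.2⟩).2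
    have hχmono : StrictMonoOn χ (Icc z₀ T) := by
      apply strictMonoOn_of_deriv_pos (convex_Icc _ _) hχc.continuousOn
      intro z hz
      rw [interior_Icc] at hz
      rw [hdχ]
      exact hpos z (hbefore z ⟨hz.1.le, hz.2⟩).1 (hbefore z ⟨hz.1.le, hz.2⟩).2
    have h1T : μ < ψ T :=
      h₁.trans (hψmono ⟨le_refl z₀, hTz₀.le⟩ ⟨hTz₀.le, le_refl T⟩ hTz₀)
    have h2T : 0 < χ T :=
      h₂.trans (hχmono ⟨le_refl z₀, hTz₀.le⟩ ⟨hTz₀.le, le_refl T⟩ hTz₀)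
    rcases hT.2 with h | h <;> linarith
  -- χ is bounded below by χ z₀ on [z₀, ∞)
  have hχge : ∀ z, z₀ ≤ z → χ z₀ ≤ χ z := by
    intro z hz
    have hmono : MonotoneOn χ (Icc z₀ z) := by
      apply monotoneOn_of_deriv_nonneg (convex_Icc _ _) hχc.continuousOn
      · intro t _
        exact (hχ t).differentiableAt.differentiableWithinAt
      · intro t ht
        rw [interior_Icc] at ht
        rw [hdχ]
        exact (hpos t (key t ht.1.le).1 (key t ht.1.le).2).le
    exact hmono (left_mem_Icc.mpr hz) (right_mem_Icc.mpr hz) hz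
  -- linear lower bound for ψ
  have hφ : ∀ t, HasDerivAt (fun s => ψ s - χ z₀ * s) (χ t - χ z₀) t := by
    intro t
    exact ((hψ t).sub ((hasDerivAt_id' t).const_mul (χ z₀))).congr_deriv (by ring)
  have hlin : ∀ z, z₀ ≤ z → ψ z₀ + χ z₀ * (z - z₀) ≤ ψ z := by
    intro z hz
    have hmono : MonotoneOn (fun s => ψ s - χ z₀ * s) (Icc z₀ z) := by
      apply monotoneOn_of_deriv_nonneg (convex_Icc _ _)
        ((by fun_prop : Continuous fun s => ψ s - χ z₀ * s).continuousOn)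
      · intro t _
        exact (hφ t).differentiableAt.differentiableWithinAt
      · intro t ht
        rw [interior_Icc] at ht
        rw [(hφ t).deriv]
        linarith [hχge t ht.1.le]
    have := hmono (left_mem_Icc.mpr hz) (right_mem_Icc.mpr hz) hz
    simp only at this
    nlinarith
  have hlinT : Tendsto (fun z => ψ z₀ + χ z₀ * (z - z₀)) atTop atTop := by
    apply tendsto_atTop_add_const_left
    exact Tendsto.const_mul_atTop h₂ (tendsto_atTop_add_const_right _ _ tendsto_id)
  exact tendsto_atTop_mono' atTop (eventually_atTop.mpr ⟨z₀, hlin⟩) hlinT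
end

section
/- Let d, c > 0, v₀ > μ > 0, and g : [0, v₀] → ℝ continuous with g(v)(v - μ) < 0 for v ∈ [0,μ) ∪ (μ, v₀]. Suppose (ψ, χ) : ℝ → ℝ² is a globally defined bounded solution of ψ' = χ, dχ' = cχ - ψ g(ψ) with 0 < ψ(z) ≤ v₀ for all z. If there exists z₀ with ψ(z₀) > μ and χ(z₀) ≥ 0, then ψ is unbounded — a contradiction. Hence no point of the trajectory lies in {ψ > μ, χ ≥ 0} ∪ {ψ = μ, χ > 0}. -/
open Set Filter Topology

/-- If `f` has positive derivative at `z₀` and `h` is continuous with `c0 < h z₀`,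
then there is a point just after `z₀` where `f` exceeds `f z₀` and `h` still exceeds `c0`. -/
lemma aux_push (f h : ℝ → ℝ) (f' z₀ c0 : ℝ) (hf : HasDerivAt f f' z₀) (hf' : 0 < f')
    (hh : ContinuousAt h z₀) (hhc : c0 < h z₀) :
    ∃ z₁, f z₀ < f z₁ ∧ c0 < h z₁ := by
  have hs := hasDerivAt_iff_tendsto_slope.mp hf
  have h1 : ∀ᶠ z in 𝓝[≠] z₀, 0 < slope f z₀ z := hs (Ioi_mem_nhds hf')
  have h2 : ∀ᶠ z in 𝓝 z₀, c0 < h z := hh (Ioi_mem_nhds hhc)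
  have hsub : Set.Ioi z₀ ⊆ {z₀}ᶜ := fun x hx => ne_of_gt hx
  have h3 : ∀ᶠ z in 𝓝[>] z₀, (0 < slope f z₀ z ∧ c0 < h z) ∧ z ∈ Set.Ioi z₀ :=
    ((h1.filter_mono (nhdsWithin_mono z₀ hsub)).and
      (eventually_nhdsWithin_of_eventually_nhds h2)).and eventually_mem_nhdsWithin
  obtain ⟨z₁, ⟨hslope, hhz⟩, hz₁⟩ := h3.exists
  refine ⟨z₁, ?_, hhz⟩
  have hz : (0:ℝ) < z₁ - z₀ := by simpa using sub_pos.mpr (Set.mem_Ioi.mp hz₁)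
  rw [slope_def_field] at hslope
  have : 0 < f z₁ - f z₀ := by
    have := mul_pos hslope hz
    rw [div_mul_cancel₀] at this
    · linarith
    · exact ne_of_gt hz
  linarith

/-- Main contradiction lemma: a point with `ψ > μ`, `χ > 0` forces `ψ` above `v₀`. -/
lemma key_contra (d c μ v₀ : ℝ) (hd : 0 < d) (hc : 0 < c) (hμ : 0 < μ) (hv₀ : μ < v₀)
    (g : ℝ → ℝ)
    (hsign : ∀ v ∈ Set.Icc (0 : ℝ) v₀, v ≠ μ → g v * (v - μ) < 0)
    (ψ χ : ℝ → ℝ)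
    (hψ : ∀ z, HasDerivAt ψ (χ z) z)
    (hχ : ∀ z, HasDerivAt χ ((c * χ z - ψ z * g (ψ z)) / d) z)
    (hbd : ∀ z, 0 < ψ z ∧ ψ z ≤ v₀)
    (z₁ : ℝ) (h1 : μ < ψ z₁) (h2 : 0 < χ z₁) : False := by
  have contψ : Continuous ψ := by
    refine continuous_iff_continuousAt.mpr fun z => (hψ z).continuousAt
  have contχ : Continuous χ := by
    refine continuous_iff_continuousAt.mpr fun z => (hχ z).continuousAt
  -- positivity of χ' whenever ψ > μ and χ ≥ 0
  have derivχ_pos : ∀ t, μ < ψ t → 0 ≤ χ t → 0 < (c * χ t - ψ t * g (ψ t)) / d := by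
    intro t ht hct
    have hmem : ψ t ∈ Set.Icc (0:ℝ) v₀ := ⟨le_of_lt (hbd t).1, (hbd t).2⟩
    have hne : ψ t ≠ μ := ne_of_gt ht
    have hgs := hsign (ψ t) hmem hne
    have hgneg : g (ψ t) < 0 := by nlinarith
    have : ψ t * g (ψ t) < 0 := mul_neg_of_pos_of_neg (hbd t).1 hgneg
    have hcnum : 0 < c * χ t - ψ t * g (ψ t) := by nlinarith
    exact div_pos hcnum hd
  -- forward invariance: for all z ≥ z₁, ψ z > μ and χ z > 0
  have good : ∀ z, z₁ ≤ z → μ < ψ z ∧ 0 < χ z := by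
    by_contra hbad
    push_neg at hbad
    set B : Set ℝ := {z | z₁ ≤ z ∧ (ψ z ≤ μ ∨ χ z ≤ 0)} with hBdef
    have hBne : B.Nonempty := by
      obtain ⟨z, hz, hz2⟩ := hbad
      refine ⟨z, hz, ?_⟩
      by_cases hp : μ < ψ z
      · exact Or.inr (hz2 hp)
      · exact Or.inl (le_of_not_gt hp)
    have hBc : IsClosed B := by
      have : B = Set.Ici z₁ ∩ ({z | ψ z ≤ μ} ∪ {z | χ z ≤ 0}) := by
        ext x; simp [hBdef, Set.mem_Ici]
      rw [this]
      exact isClosed_Ici.inter ((isClosed_le contψ continuous_const).union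
        (isClosed_le contχ continuous_const))
    have hBbd : BddBelow B := ⟨z₁, fun x hx => hx.1⟩
    set z₂ := sInf B with hz₂def
    have hz₂B : z₂ ∈ B := hBc.csInf_mem hBne hBbd
    have hz₁nB : z₁ ∉ B := by
      intro h
      rcases h.2 with h | h <;> linarith
    have hlt : z₁ < z₂ := lt_of_le_of_ne hz₂B.1 (fun h => hz₁nB (h ▸ hz₂B))
    have hgood' : ∀ t, z₁ ≤ t → t < z₂ → μ < ψ t ∧ 0 < χ t := by
      intro t ht1 ht2
      have htnB : t ∉ B := fun h => absurd (csInf_le hBbd h) (not_le.mpr ht2)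
      simp only [hBdef, Set.mem_setOf_eq, not_and, not_or, not_le] at htnB
      exact htnB ht1
    -- ψ strictly increasing on [z₁, z₂]
    have hψmono : StrictMonoOn ψ (Set.Icc z₁ z₂) := by
      refine strictMonoOn_of_deriv_pos (convex_Icc _ _) contψ.continuousOn ?_
      intro x hx
      rw [interior_Icc] at hx
      rw [(hψ x).deriv]
      exact (hgood' x (le_of_lt hx.1) hx.2).2
    have hχmono : StrictMonoOn χ (Set.Icc z₁ z₂) := by
      refine strictMonoOn_of_deriv_pos (convex_Icc _ _) contχ.continuousOn ?_
      intro x hx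
      rw [interior_Icc] at hx
      rw [(hχ x).deriv]
      obtain ⟨hp, hcp⟩ := hgood' x (le_of_lt hx.1) hx.2
      exact derivχ_pos x hp (le_of_lt hcp)
    have hψ2 : ψ z₁ < ψ z₂ :=
      hψmono ⟨le_refl _, le_of_lt hlt⟩ ⟨le_of_lt hlt, le_refl _⟩ hlt
    have hχ2 : χ z₁ < χ z₂ :=
      hχmono ⟨le_refl _, le_of_lt hlt⟩ ⟨le_of_lt hlt, le_refl _⟩ hlt
    rcases hz₂B.2 with h | h <;> linarith
  -- χ is monotone on [z₁, ∞), so χ z ≥ χ z₁ there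
  have hχmono : MonotoneOn χ (Set.Ici z₁) := by
    refine monotoneOn_of_deriv_nonneg (convex_Ici _) contχ.continuousOn
      (fun x _ => ((hχ x).differentiableAt).differentiableWithinAt) ?_
    intro x hx
    rw [interior_Ici] at hx
    rw [(hχ x).deriv]
    obtain ⟨hp, hcp⟩ := good x (le_of_lt hx)
    exact le_of_lt (derivχ_pos x hp (le_of_lt hcp))
  set ε := χ z₁ with hεdef
  have hχge : ∀ z, z₁ ≤ z → ε ≤ χ z := fun z hz =>
    hχmono (Set.self_mem_Ici) hz hz
  -- φ z = ψ z - ε z is monotone on [z₁, ∞)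
  have hφmono : MonotoneOn (fun z => ψ z - ε * z) (Set.Ici z₁) := by
    refine monotoneOn_of_deriv_nonneg (convex_Ici _)
      (contψ.sub (continuous_const.mul continuous_id)).continuousOn
      (fun x _ => (((hψ x).sub ((hasDerivAt_id x).const_mul ε)).differentiableAt).differentiableWithinAt) ?_
    intro x hx
    rw [interior_Ici] at hx
    have hd' : HasDerivAt (fun z => ψ z - ε * z) (χ x - ε) x := by
      exact ((hψ x).sub ((hasDerivAt_id x).const_mul ε)).congr_deriv (by simp)
    rw [hd'.deriv]
    linarith [hχge x (le_of_lt hx)]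
  set Z := z₁ + (v₀ - ψ z₁) / ε + 1 with hZdef
  have hZge : z₁ ≤ Z := by
    have : 0 ≤ (v₀ - ψ z₁) / ε := div_nonneg (by linarith [(hbd z₁).2]) (le_of_lt h2)
    simp [hZdef]; linarith
  have hφ : ψ z₁ - ε * z₁ ≤ ψ Z - ε * Z :=
    hφmono Set.self_mem_Ici hZge hZge
  have hεZ : ε * (Z - z₁) = (v₀ - ψ z₁) + ε := by
    have : Z - z₁ = (v₀ - ψ z₁) / ε + 1 := by rw [hZdef]; ring
    rw [this, mul_add, mul_one, mul_div_cancel₀ _ (ne_of_gt h2)]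
  have : v₀ < ψ Z := by nlinarith [hbd Z]
  linarith [(hbd Z).2]

/-- A globally defined trajectory with `0 < ψ ≤ v₀` never lies in
`{ψ > μ, χ ≥ 0} ∪ {ψ = μ, χ > 0}`. -/
theorem stmt9 (d c μ v₀ : ℝ) (hd : 0 < d) (hc : 0 < c) (hμ : 0 < μ) (hv₀ : μ < v₀)
    (g : ℝ → ℝ) (hg : ContinuousOn g (Set.Icc 0 v₀))
    (hsign : ∀ v ∈ Set.Icc (0 : ℝ) v₀, v ≠ μ → g v * (v - μ) < 0)
    (ψ χ : ℝ → ℝ)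
    (hψ : ∀ z, HasDerivAt ψ (χ z) z)
    (hχ : ∀ z, HasDerivAt χ ((c * χ z - ψ z * g (ψ z)) / d) z)
    (hbd : ∀ z, 0 < ψ z ∧ ψ z ≤ v₀) :
    ∀ z, ¬ ((μ < ψ z ∧ 0 ≤ χ z) ∨ (ψ z = μ ∧ 0 < χ z)) := by
  intro z hz
  have contψ : Continuous ψ := continuous_iff_continuousAt.mpr fun t => (hψ t).continuousAt
  have contχ : Continuous χ := continuous_iff_continuousAt.mpr fun t => (hχ t).continuousAt
  rcases hz with ⟨hp, hcge⟩ | ⟨hpeq, hcpos⟩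
  · rcases eq_or_lt_of_le hcge with hceq | hcpos
    · -- χ z = 0, ψ z > μ : χ' z > 0, push into the open region
      have hmem : ψ z ∈ Set.Icc (0:ℝ) v₀ := ⟨le_of_lt (hbd z).1, (hbd z).2⟩
      have hgs := hsign (ψ z) hmem (ne_of_gt hp)
      have hgneg : g (ψ z) < 0 := by nlinarith
      have hnum : 0 < c * χ z - ψ z * g (ψ z) := by
        have : ψ z * g (ψ z) < 0 := mul_neg_of_pos_of_neg (hbd z).1 hgneg
        rw [← hceq]; nlinarith
      obtain ⟨z₁, hf, hh⟩ := aux_push χ ψ _ z μ (hχ z) (div_pos hnum hd)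
        contψ.continuousAt hp
      exact key_contra d c μ v₀ hd hc hμ hv₀ g hsign ψ χ hψ hχ hbd z₁ hh
        (by rw [← hceq] at hf; exact hf)
    · exact key_contra d c μ v₀ hd hc hμ hv₀ g hsign ψ χ hψ hχ hbd z hp hcpos
  · -- ψ z = μ, χ z > 0 : ψ' z > 0, push into the open region
    obtain ⟨z₁, hf, hh⟩ := aux_push ψ χ (χ z) z 0 (hψ z) hcpos contχ.continuousAt hcpos
    exact key_contra d c μ v₀ hd hc hμ hv₀ g hsign ψ χ hψ hχ hbd z₁
      (by rw [hpeq] at hf; exact hf) hh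
end

section
/- Let d, c > 0, v₀ > 0, g continuous on [0, v₀]. Suppose (ψ, χ) solves ψ' = χ, dχ' = cχ - ψ g(ψ) on all of ℝ with 0 < ψ(z) ≤ v₀ for all z. Define θ₊ = max_{η∈[0,v₀]} η g(η)/c and θ₋ = min_{η∈[0,v₀]} η g(η)/c. Then θ₋ ≤ χ(z) ≤ θ₊ for all z ∈ ℝ. -/
lemma blowup_lemma (k θ B : ℝ) (hk : 0 < k) (ψ χ χd : ℝ → ℝ)
    (hψ : ∀ z, HasDerivAt ψ (χ z) z)
    (hχ : ∀ z, HasDerivAt χ (χd z) z)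
    (hineq : ∀ z, k * (χ z - θ) ≤ χd z)
    (hub : ∀ z, ψ z ≤ B) :
    ∀ z, χ z ≤ θ := by
  by_contra h
  push_neg at h
  obtain ⟨z₀, hz₀⟩ := h
  set ε := χ z₀ - θ with hε
  have hεpos : 0 < ε := by simp only [hε]; linarith
  set F : ℝ → ℝ := fun z => Real.exp (-(k * z)) * (χ z - θ) with hF
  have hF' : ∀ z, HasDerivAt F (Real.exp (-(k * z)) * (χd z - k * (χ z - θ))) z := by
    intro z
    have h1 : HasDerivAt (fun z : ℝ => Real.exp (-(k * z))) (-k * Real.exp (-(k * z))) z := by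
      have := (Real.hasDerivAt_exp (-(k * z))).comp z
        (((hasDerivAt_id z).const_mul k).neg)
      have this' : HasDerivAt (fun z : ℝ => Real.exp (-(k * z))) _ z := this
      exact this'.congr_deriv (by ring)
    have h2 : HasDerivAt (fun z => χ z - θ) (χd z) z := (hχ z).sub_const θ
    have := h1.mul h2
    have this' : HasDerivAt F _ z := this
    exact this'.congr_deriv (by ring)
  have hFmono : Monotone F := by
    apply monotone_of_deriv_nonneg
    · exact fun z => (hF' z).differentiableAt
    · intro z
      rw [(hF' z).deriv]
      have h4 : 0 ≤ χd z - k * (χ z - θ) := by linarith [hineq z]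
      positivity
  have hgrow : ∀ z, z₀ ≤ z → θ + ε * Real.exp (k * (z - z₀)) ≤ χ z := by
    intro z hz
    have hmon := hFmono hz
    simp only [hF] at hmon
    have h3 : ε * Real.exp (k * (z - z₀)) ≤ χ z - θ := by
      rw [hε, show k * (z - z₀) = -(k * z₀) - (-(k * z)) by ring, Real.exp_sub]
      rw [mul_comm, div_mul_eq_mul_div, div_le_iff₀ (Real.exp_pos _)]
      linarith [hmon]
    linarith
  set t := Real.log ((|θ| + 1) / ε) / k with ht
  have hkt : Real.exp (k * t) = (|θ| + 1) / ε := by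
    rw [ht, mul_div_cancel₀ _ (ne_of_gt hk)]
    exact Real.exp_log (by positivity)
  set z₂ := max z₀ (z₀ + t) with hz₂
  have hχ1 : ∀ z, z₂ ≤ z → 1 ≤ χ z := by
    intro z hz
    have hz0 : z₀ ≤ z := le_trans (le_max_left _ _) hz
    have h1 := hgrow z hz0
    have h2 : Real.exp (k * t) ≤ Real.exp (k * (z - z₀)) := by
      apply Real.exp_le_exp.mpr
      have : z₀ + t ≤ z := le_trans (le_max_right _ _) hz
      nlinarith
    rw [hkt] at h2
    have h3 : |θ| + 1 ≤ ε * Real.exp (k * (z - z₀)) := by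
      rw [div_le_iff₀ hεpos] at h2
      nlinarith
    have hθabs : -|θ| ≤ θ := neg_abs_le θ
    linarith
  have hGd : ∀ w, HasDerivAt (fun z => ψ z - z) (χ w - 1) w :=
    fun w => (hψ w).sub (hasDerivAt_id w)
  have hGmono : MonotoneOn (fun z => ψ z - z) (Set.Ici z₂) := by
    apply monotoneOn_of_deriv_nonneg (convex_Ici z₂)
    · exact (Differentiable.continuous (fun w => (hGd w).differentiableAt)).continuousOn
    · exact fun w _ => ((hGd w).differentiableAt).differentiableWithinAt
    · intro w hw
      rw [(hGd w).deriv]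
      rw [interior_Ici] at hw
      linarith [hχ1 w (le_of_lt hw)]
  set z₃ := z₂ + max 0 (B - ψ z₂) + 1 with hz₃
  have hle : z₂ ≤ z₃ := by
    have := le_max_left 0 (B - ψ z₂)
    linarith
  have := hGmono (Set.self_mem_Ici) (Set.mem_Ici.mpr hle) hle
  simp only at this
  have h5 : B - ψ z₂ ≤ max 0 (B - ψ z₂) := le_max_right _ _
  have := hub z₃
  linarith

/-- A priori bounds `θ₋ ≤ χ ≤ θ₊` for the derivative component of a bounded
trajectory of `ψ' = χ`, `dχ' = cχ - ψ g(ψ)`. -/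
theorem stmt10 (d c v₀ : ℝ) (hd : 0 < d) (hc : 0 < c) (hv₀ : 0 < v₀)
    (g : ℝ → ℝ) (hg : ContinuousOn g (Set.Icc 0 v₀))
    (ψ χ : ℝ → ℝ)
    (hψ : ∀ z, HasDerivAt ψ (χ z) z)
    (hχ : ∀ z, HasDerivAt χ ((c * χ z - ψ z * g (ψ z)) / d) z)
    (hbd : ∀ z, 0 < ψ z ∧ ψ z ≤ v₀)
    (θp θm : ℝ)
    (hθp : θp = sSup ((fun η => η * g η / c) '' Set.Icc 0 v₀))
    (hθm : θm = sInf ((fun η => η * g η / c) '' Set.Icc 0 v₀)) :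
    ∀ z, θm ≤ χ z ∧ χ z ≤ θp := by
  have hf : ContinuousOn (fun η => η * g η / c) (Set.Icc 0 v₀) :=
    (continuousOn_id.mul hg).div_const c
  have hK : IsCompact ((fun η => η * g η / c) '' Set.Icc 0 v₀) :=
    isCompact_Icc.image_of_continuousOn hf
  have hmem : ∀ z, ψ z ∈ Set.Icc 0 v₀ := fun z => ⟨(hbd z).1.le, (hbd z).2⟩
  have hup : ∀ z, ψ z * g (ψ z) ≤ c * θp := by
    intro z
    have h1 : ψ z * g (ψ z) / c ≤ θp := by
      rw [hθp]
      exact le_csSup hK.bddAbove (Set.mem_image_of_mem _ (hmem z))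
    rw [div_le_iff₀ hc] at h1
    linarith [h1]
  have hlo : ∀ z, c * θm ≤ ψ z * g (ψ z) := by
    intro z
    have h1 : θm ≤ ψ z * g (ψ z) / c := by
      rw [hθm]
      exact csInf_le hK.bddBelow (Set.mem_image_of_mem _ (hmem z))
    rw [le_div_iff₀ hc] at h1
    linarith [h1]
  have hk : 0 < c / d := div_pos hc hd
  have hupper : ∀ z, χ z ≤ θp := by
    apply blowup_lemma (c / d) θp v₀ hk ψ χ (fun z => (c * χ z - ψ z * g (ψ z)) / d) hψ hχ
    · intro z
      rw [div_mul_eq_mul_div, div_le_div_iff_of_pos_right hd]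
      nlinarith [hup z]
    · exact fun z => (hbd z).2
  have hlower : ∀ z, θm ≤ χ z := by
    have := blowup_lemma (c / d) (-θm) 0 hk (fun z => -ψ z) (fun z => -χ z)
      (fun z => -((c * χ z - ψ z * g (ψ z)) / d))
      (fun z => (hψ z).neg) (fun z => (hχ z).neg)
      (by
        intro z
        simp only [← neg_div, div_mul_eq_mul_div]
        rw [div_le_div_iff_of_pos_right hd]
        nlinarith [hlo z])
      (fun z => by simp; linarith [(hbd z).1])
    intro z
    have h := this z
    simp only [neg_le_neg_iff] at h
    linarith [h]
  exact fun z => ⟨hlower z, hupper z⟩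
end

section
/- Let f : ℝ → ℝ be differentiable with f' uniformly continuous on ℝ. If f(z) converges to a finite limit as z → -∞, then f'(z) → 0 as z → -∞. -/
/-- Barbalat's lemma at `-∞`: if `f` is differentiable with uniformly continuous
derivative and `f` converges as `z → -∞`, then `f'(z) → 0` as `z → -∞`. -/
theorem stmt11 (f f' : ℝ → ℝ)
    (hf : ∀ z, HasDerivAt f (f' z) z)
    (hf' : UniformContinuous f')
    (L : ℝ) (hlim : Filter.Tendsto f Filter.atBot (nhds L)) :
    Filter.Tendsto f' Filter.atBot (nhds 0) := by
  rw [Metric.tendsto_nhds]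
  intro ε hε
  -- uniform continuity: get δ
  obtain ⟨δ, hδ, hδε⟩ := Metric.uniformContinuous_iff.1 hf' (ε / 2) (by positivity)
  -- Cauchy criterion for f near -∞
  have hεδ : 0 < ε * δ / 8 := by positivity
  have hB : ∀ᶠ z in Filter.atBot, dist (f z) L < ε * δ / 8 :=
    hlim (Metric.ball_mem_nhds L hεδ)
  obtain ⟨B, hBmem⟩ := Filter.eventually_atBot.1 hB
  rw [Filter.eventually_atBot]
  refine ⟨B - δ, fun z hz => ?_⟩
  by_contra hcon
  push_neg at hcon
  -- MVT on [z, z + δ/2]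
  have hlt : z < z + δ / 2 := by linarith
  obtain ⟨c, hc, hslope⟩ := exists_hasDerivAt_eq_slope f f' hlt
    (fun x _ => (hf x).continuousAt.continuousWithinAt) (fun x _ => hf x)
  have hcz : dist c z < δ := by
    rw [Real.dist_eq, abs_lt]
    constructor <;> [linarith [hc.1]; linarith [hc.2]]
  have h1 : dist (f' c) (f' z) < ε / 2 := hδε hcz
  have h2 : ε / 2 < |f' c| := by
    have := abs_sub_abs_le_abs_sub (f' z) (f' c)
    rw [Real.dist_eq, abs_sub_comm] at h1
    rw [Real.dist_eq, sub_zero] at hcon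
    linarith
  have h3 : |f (z + δ / 2) - f z| = |f' c| * (δ / 2) := by
    have heq : f (z + δ / 2) - f z = f' c * (δ / 2) := by
      rw [hslope, show z + δ/2 - z = δ/2 by ring,
        div_mul_cancel₀ _ (by positivity : (δ/2) ≠ 0)]
    rw [heq, abs_mul, abs_of_pos (by linarith : (0:ℝ) < δ/2)]
  have h4 : dist (f (z + δ / 2)) (f z) < ε * δ / 4 := by
    calc dist (f (z + δ / 2)) (f z) ≤ dist (f (z + δ/2)) L + dist (f z) L :=
          dist_triangle_right _ _ _
      _ < ε * δ / 8 + ε * δ / 8 := by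
          gcongr
          · exact hBmem _ (by linarith)
          · exact hBmem _ (by linarith)
      _ = ε * δ / 4 := by ring
  rw [Real.dist_eq] at h4
  nlinarith [h3, h2, h4]
end

section
/- Let d, c > 0, g continuous with g(v)(v - μ) < 0 for v ≠ μ. Suppose (ψ, χ) solves ψ' = χ, dχ' = cχ - ψ g(ψ) on ℝ, ψ is bounded with values in (μ, v₀], ψ is monotone decreasing on (-∞, 0], and χ and χ' are bounded with χ, χ' → 0 as z → -∞. Then L := lim_{z→-∞} ψ(z) exists, L ≥ μ, and g(L) = 0, hence L = μ. In particular, if additionally ψ(0) ≥ μ with strict monotonicity giving L > ψ(0) ≥ μ, a contradiction results, so no such trajectory starting in A₅ = {ψ > μ, χ < 0} exists. -/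
/-- Exclusion of the region `A₅ = {ψ > μ, χ < 0}`: no trajectory of
`ψ' = χ`, `dχ' = cχ - ψ g(ψ)` with values of `ψ` in `(μ, v₀]`, `ψ` decreasing
on `(-∞, 0]`, and `χ, χ' → 0` at `-∞` can exist. -/
theorem stmt12 (d c μ v₀ : ℝ) (hd : 0 < d) (hc : 0 < c) (hμ : 0 < μ) (hv₀ : μ < v₀)
    (g : ℝ → ℝ) (hg : Continuous g)
    (hsign : ∀ v, v ≠ μ → g v * (v - μ) < 0)
    (ψ χ χ' : ℝ → ℝ)
    (hψ : ∀ z, HasDerivAt ψ (χ z) z)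
    (hχ : ∀ z, HasDerivAt χ (χ' z) z)
    (heq : ∀ z, d * χ' z = c * χ z - ψ z * g (ψ z))
    (hval : ∀ z, μ < ψ z ∧ ψ z ≤ v₀)
    (hmono : AntitoneOn ψ (Set.Iic 0))
    (hbd : ∃ M, ∀ z, |χ z| ≤ M ∧ |χ' z| ≤ M)
    (hχ0 : Filter.Tendsto χ Filter.atBot (nhds 0))
    (hχ'0 : Filter.Tendsto χ' Filter.atBot (nhds 0)) :
    False := by
  classical
  set f : ℝ → ℝ := fun z => ψ (min z 0) with hf
  have hanti : Antitone f := fun a b hab =>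
    hmono (Set.mem_Iic.2 (min_le_right a 0)) (Set.mem_Iic.2 (min_le_right b 0))
      (min_le_min hab le_rfl)
  have hbdd : BddAbove (Set.range f) := ⟨v₀, by rintro x ⟨z, rfl⟩; exact (hval _).2⟩
  set L : ℝ := ⨆ z, f z with hL
  have hfL : Filter.Tendsto f Filter.atBot (nhds L) := tendsto_atBot_ciSup hanti hbdd
  have heqf : f =ᶠ[Filter.atBot] ψ := by
    filter_upwards [Filter.eventually_le_atBot (0:ℝ)] with z hz
    simp [hf, min_eq_left hz]
  have hψL : Filter.Tendsto ψ Filter.atBot (nhds L) := hfL.congr' heqf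
  have hLgt : μ < L := lt_of_lt_of_le (hval 0).1 <| by
    have : f 0 ≤ L := le_ciSup hbdd 0
    simpa [hf] using this
  have hcomp : Filter.Tendsto (fun z => ψ z * g (ψ z)) Filter.atBot (nhds (L * g L)) :=
    ((continuous_id.mul hg).tendsto L).comp hψL
  have hzero : Filter.Tendsto (fun z => ψ z * g (ψ z)) Filter.atBot (nhds 0) := by
    have : Filter.Tendsto (fun z => c * χ z - d * χ' z) Filter.atBot (nhds (c * 0 - d * 0)) :=
      (hχ0.const_mul c).sub (hχ'0.const_mul d)
    simpa using this.congr (fun z => by linarith [heq z])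
  have hLg : L * g L = 0 := tendsto_nhds_unique hcomp hzero
  have hgL : g L = 0 := by
    rcases mul_eq_zero.1 hLg with h | h
    · exact absurd h (by linarith)
    · exact h
  have := hsign L (by linarith)
  rw [hgL] at this
  linarith
end

section
/- Let c > 0, m > 0, and let a : ℝ → ℝ be continuous with a(z) ≥ -m for all z. Suppose φ : ℝ → (0,∞) is C² satisfying φ'' - cφ' + a(z)φ = 0, with φ'(z)/φ(z) → 0 as z → -∞. Then |φ'(z)/φ(z)| ≤ (c + √(c²+4m))/2 for all z ∈ ℝ. -/
/-- A priori bound on the logarithmic derivative: if `a ≥ -m`, `φ > 0` solves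
`φ'' - cφ' + a(z)φ = 0` and `φ'/φ → 0` at `-∞`, then
`|φ'/φ| ≤ (c + √(c²+4m))/2` on `ℝ`. -/
theorem stmt17 (c m : ℝ) (hc : 0 < c) (hm : 0 < m)
    (a : ℝ → ℝ) (ha : Continuous a) (ham : ∀ z, -m ≤ a z)
    (φ φ' φ'' : ℝ → ℝ)
    (hpos : ∀ z, 0 < φ z)
    (hφ' : ∀ z, HasDerivAt φ (φ' z) z)
    (hφ'' : ∀ z, HasDerivAt φ' (φ'' z) z)
    (hode : ∀ z, φ'' z - c * φ' z + a z * φ z = 0)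
    (hlim : Filter.Tendsto (fun z => φ' z / φ z) Filter.atBot (nhds 0)) :
    ∀ z, |φ' z / φ z| ≤ (c + Real.sqrt (c ^ 2 + 4 * m)) / 2 := by
  set W : ℝ → ℝ := fun z => φ' z / φ z with hWdef
  set P : ℝ := (c + Real.sqrt (c ^ 2 + 4 * m)) / 2 with hPdef
  have hφne : ∀ z, φ z ≠ 0 := fun z => (hpos z).ne'
  have hsq : Real.sqrt (c ^ 2 + 4 * m) ^ 2 = c ^ 2 + 4 * m :=
    Real.sq_sqrt (by positivity)
  have hsgt : c < Real.sqrt (c ^ 2 + 4 * m) := by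
    nth_rewrite 1 [show c = Real.sqrt (c ^ 2) by rw [Real.sqrt_sq hc.le]]
    exact Real.sqrt_lt_sqrt (by positivity) (by linarith)
  have hPgt : c < P := by rw [hPdef]; linarith
  have hPpos : 0 < P := lt_trans hc hPgt
  have hP2 : P ^ 2 = c * P + m := by
    rw [hPdef]; field_simp; nlinarith [hsq]
  have hquad : ∀ x : ℝ, (P < x ∨ x < -P) → m + c * x - x ^ 2 < 0 := by
    intro x hx
    rcases hx with h | h
    · nlinarith [hP2, mul_pos (sub_pos.mpr h) (show (0:ℝ) < x + P - c by linarith)]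
    · nlinarith [hP2, mul_pos_of_neg_of_neg (show x - P < 0 by linarith)
        (show x + P - c < 0 by linarith)]
  have hW' : ∀ z, HasDerivAt W (φ'' z / φ z - W z ^ 2) z := by
    intro z
    have h := (hφ'' z).div (hφ' z) (hφne z)
    refine h.congr_deriv ?_
    have := hφne z
    simp only [hWdef]
    field_simp
  have hDle : ∀ z, φ'' z / φ z - W z ^ 2 ≤ m + c * W z - W z ^ 2 := by
    intro z
    have h1 : φ'' z = c * φ' z - a z * φ z := by linarith [hode z]
    have h2 : φ'' z / φ z = c * W z - a z := by
      rw [h1]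
      simp only [hWdef]
      have := hφne z
      field_simp
    rw [h2]
    have := ham z
    linarith
  have hWcont : Continuous W :=
    continuous_iff_continuousAt.mpr (fun z => (hW' z).continuousAt)
  have hanti : ∀ z₁ z₂ : ℝ, z₁ < z₂ →
      (∀ x ∈ Set.Ioo z₁ z₂, P < W x ∨ W x < -P) → W z₂ < W z₁ := by
    intro z₁ z₂ hlt hx
    have hA : StrictAntiOn W (Set.Icc z₁ z₂) := by
      apply strictAntiOn_of_deriv_neg (convex_Icc z₁ z₂) hWcont.continuousOn
      intro x hxmem
      rw [interior_Icc] at hxmem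
      rw [(hW' x).deriv]
      calc φ'' x / φ x - W x ^ 2 ≤ m + c * W x - W x ^ 2 := hDle x
        _ < 0 := hquad _ (hx x hxmem)
    exact hA (Set.left_mem_Icc.mpr hlt.le) (Set.right_mem_Icc.mpr hlt.le) hlt
  have hupper : ∀ z, W z ≤ P := by
    by_contra hcon
    push_neg at hcon
    obtain ⟨z₀, hz₀⟩ := hcon
    set L := (P + W z₀) / 2 with hL
    have hPL : P < L := by rw [hL]; linarith
    have hLW : L < W z₀ := by rw [hL]; linarith
    have hclaim : ∀ z ≤ z₀, L ≤ W z := by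
      intro z₁ hz₁
      by_contra hWz₁
      push_neg at hWz₁
      have hz₁lt : z₁ < z₀ := by
        rcases lt_or_eq_of_le hz₁ with h | h
        · exact h
        · exfalso; rw [h] at hWz₁; linarith
      set S := Set.Icc z₁ z₀ ∩ {z | W z ≤ L} with hS
      have hSclosed : IsClosed S :=
        isClosed_Icc.inter (isClosed_le hWcont continuous_const)
      have hSne : S.Nonempty := ⟨z₁, Set.left_mem_Icc.mpr hz₁lt.le, hWz₁.le⟩
      have hSbdd : BddAbove S := ⟨z₀, fun x hx => hx.1.2⟩
      set s := sSup S with hs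
      have hsmem : s ∈ S := hSclosed.csSup_mem hSne hSbdd
      have hsle : W s ≤ L := hsmem.2
      have hsz₀ : s < z₀ := lt_of_le_of_ne hsmem.1.2
        (by intro h; rw [h] at hsle; linarith)
      have hgt : ∀ x ∈ Set.Ioo s z₀, P < W x ∨ W x < -P := by
        intro x hxmem
        left
        have hxnot : x ∉ S := fun hmem => not_lt.mpr (le_csSup hSbdd hmem) hxmem.1
        have hxIcc : x ∈ Set.Icc z₁ z₀ := ⟨le_trans hsmem.1.1 hxmem.1.le, hxmem.2.le⟩
        have hnle : ¬ (W x ≤ L) := fun h => hxnot ⟨hxIcc, h⟩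
        linarith [not_le.mp hnle]
      have hlt := hanti s z₀ hsz₀ hgt
      linarith
    have hev : ∀ᶠ z in Filter.atBot, W z < L :=
      hlim.eventually_lt_const (by linarith : (0:ℝ) < L)
    obtain ⟨N, hN⟩ := Filter.eventually_atBot.mp hev
    have h1 := hclaim (min N z₀) (min_le_right _ _)
    have h2 := hN (min N z₀) (min_le_left _ _)
    linarith
  have hlower : ∀ z, -P ≤ W z := by
    by_contra hcon
    push_neg at hcon
    obtain ⟨z₀, hz₀⟩ := hcon
    have hclaim : ∀ z, z₀ ≤ z → W z ≤ W z₀ := by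
      intro z₁ hz₁
      by_contra hWz₁
      push_neg at hWz₁
      have hz₁gt : z₀ < z₁ := by
        rcases lt_or_eq_of_le hz₁ with h | h
        · exact h
        · exfalso; rw [← h] at hWz₁; linarith
      set L := (W z₀ + min (W z₁) (-P)) / 2 with hL
      have hmin : W z₀ < min (W z₁) (-P) := lt_min hWz₁ hz₀
      have h1 : W z₀ < L := by rw [hL]; linarith
      have h2 : L < min (W z₁) (-P) := by rw [hL]; linarith
      have h3 : L < W z₁ := lt_of_lt_of_le h2 (min_le_left _ _)
      have h4 : L < -P := lt_of_lt_of_le h2 (min_le_right _ _)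
      set S := Set.Icc z₀ z₁ ∩ {z | L ≤ W z} with hS
      have hSclosed : IsClosed S :=
        isClosed_Icc.inter (isClosed_le continuous_const hWcont)
      have hSne : S.Nonempty := ⟨z₁, Set.right_mem_Icc.mpr hz₁gt.le, h3.le⟩
      have hSbdd : BddBelow S := ⟨z₀, fun x hx => hx.1.1⟩
      set s := sInf S with hs
      have hsmem : s ∈ S := hSclosed.csInf_mem hSne hSbdd
      have hsge : L ≤ W s := hsmem.2
      have hsz₀ : z₀ < s := lt_of_le_of_ne hsmem.1.1
        (by intro h; rw [← h] at hsge; linarith)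
      have hgt : ∀ x ∈ Set.Ioo z₀ s, P < W x ∨ W x < -P := by
        intro x hxmem
        right
        have hxnot : x ∉ S := fun hmem => not_lt.mpr (csInf_le hSbdd hmem) hxmem.2
        have hxIcc : x ∈ Set.Icc z₀ z₁ := ⟨hxmem.1.le, le_trans hxmem.2.le hsmem.1.2⟩
        have hnle : ¬ (L ≤ W x) := fun h => hxnot ⟨hxIcc, h⟩
        linarith [not_le.mp hnle]
      have hlt := hanti z₀ s hsz₀ hgt
      linarith
    have hWneg : ∀ z, z₀ ≤ z → W z < 0 := fun z hz =>
      lt_of_le_of_lt (hclaim z hz) (by linarith)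
    have hw₀neg : W z₀ < 0 := hWneg z₀ le_rfl
    have hw₀sq : m < (W z₀) ^ 2 := by
      nlinarith [hP2, mul_pos hc hPpos, mul_lt_mul_of_pos_left hz₀ hPpos,
        sq_nonneg (W z₀ + P)]
    have hw₀sqpos : (0:ℝ) < (W z₀) ^ 2 := lt_trans hm hw₀sq
    set ε := 1 - m / (W z₀) ^ 2 with hε
    have hεpos : 0 < ε := by
      rw [hε]
      have h := (div_lt_one hw₀sqpos).mpr hw₀sq
      linarith
    set g : ℝ → ℝ := fun z => (W z)⁻¹ - ε * z with hg
    have hg' : ∀ z, z₀ ≤ z →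
        HasDerivAt g (-(φ'' z / φ z - W z ^ 2) / (W z) ^ 2 - ε) z := by
      intro z hz
      have h1 := (hW' z).inv (hWneg z hz).ne
      have h2 : HasDerivAt (fun y : ℝ => ε * y) ε z := by
        simpa using (hasDerivAt_id z).const_mul ε
      exact h1.sub h2
    have hderiv_ge : ∀ z, z₀ ≤ z →
        ε ≤ -(φ'' z / φ z - W z ^ 2) / (W z) ^ 2 := by
      intro z hz
      have hWle := hclaim z hz
      have hWneg' := hWneg z hz
      have hWsqpos : (0:ℝ) < (W z) ^ 2 := by nlinarith
      rw [le_div_iff₀ hWsqpos]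
      have hWsq : (W z₀) ^ 2 ≤ (W z) ^ 2 := by nlinarith
      have hD := hDle z
      have hq : m / (W z₀) ^ 2 * (W z₀) ^ 2 = m := div_mul_cancel₀ m hw₀sqpos.ne'
      have hqpos : 0 < m / (W z₀) ^ 2 := div_pos hm hw₀sqpos
      have hqm : m ≤ m / (W z₀) ^ 2 * (W z) ^ 2 := by
        calc m = m / (W z₀) ^ 2 * (W z₀) ^ 2 := hq.symm
          _ ≤ m / (W z₀) ^ 2 * (W z) ^ 2 :=
            mul_le_mul_of_nonneg_left hWsq hqpos.le
      have hcW : c * W z ≤ 0 := mul_nonpos_of_nonneg_of_nonpos hc.le hWneg'.le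
      have hexp : ε * W z ^ 2 = W z ^ 2 - m / (W z₀) ^ 2 * (W z) ^ 2 := by
        rw [hε]; ring
      linarith
    have hmono : MonotoneOn g (Set.Ici z₀) := by
      apply monotoneOn_of_deriv_nonneg (convex_Ici z₀)
      · exact fun x hx => ((hg' x hx).continuousAt).continuousWithinAt
      · intro x hx
        rw [interior_Ici] at hx
        exact (hg' x hx.le).differentiableAt.differentiableWithinAt
      · intro x hx
        rw [interior_Ici] at hx
        rw [(hg' x hx.le).deriv]
        have := hderiv_ge x hx.le
        linarith
    set z₂ := z₀ + (1 - (W z₀)⁻¹) / ε with hz₂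
    have hinv₀ : (W z₀)⁻¹ < 0 := inv_lt_zero.mpr hw₀neg
    have hz₂ge : z₀ ≤ z₂ := by
      rw [hz₂]
      have : 0 < (1 - (W z₀)⁻¹) / ε := div_pos (by linarith) hεpos
      linarith
    have hgle : g z₀ ≤ g z₂ := hmono Set.self_mem_Ici hz₂ge hz₂ge
    have hinv₂ : (W z₂)⁻¹ < 0 := inv_lt_zero.mpr (hWneg z₂ hz₂ge)
    have hεz : ε * (z₂ - z₀) = 1 - (W z₀)⁻¹ := by
      rw [hz₂]
      field_simp
      ring
    have hg₀ : g z₀ = (W z₀)⁻¹ - ε * z₀ := rfl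
    have hg₂ : g z₂ = (W z₂)⁻¹ - ε * z₂ := rfl
    rw [hg₀, hg₂] at hgle
    nlinarith
  intro z
  rw [abs_le]
  exact ⟨hlower z, hupper z⟩
end
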